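/- Let G be a hyperbolic random graph on n vertices with parameters α ∈ (1/2,1) and C ∈ ℝ, and fix τ > 0. Then for every constant c > 0 there exists a constant K such that with probability 1 − O(n^{−c}), every set of at most 2w + 1 circularly consecutive sectors of the sector decomposition contains at most K·log(n) of the n sampled points, where w = e^{γ(n,τ)}·log^{(3)}(n). -/

import Mathlib

open MeasureTheory ProbabilityTheory Filter Real Asymptotics
open scoped ENNReal NNReal

/-- Twice iterated natural logarithm. -/
noncomputable def loglog (n : ℕ) : ℝ := Real.log (Real.log n)

/-- Thrice iterated natural logarithm. -/
noncomputable def logloglog (n : ℕ) : ℝ := Real.log (Real.log (Real.log n))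

/-- `γ(n, τ) = log(τ·log^{(2)}(n) / (2·(log^{(3)}(n))²))`. -/
noncomputable def gam (n : ℕ) (τ : ℝ) : ℝ :=
  Real.log (τ * loglog n / (2 * (logloglog n) ^ 2))

/-- The radius `R = 2·log n + C` of the hyperbolic disk. -/
noncomputable def bigR (C : ℝ) (n : ℕ) : ℝ := 2 * Real.log n + C

/-- The threshold radius `ρ(n) = R − log((π/2)·e^{C/2}·γ(n,τ))`. -/
noncomputable def rho (C τ : ℝ) (n : ℕ) : ℝ :=
  bigR C n - Real.log (Real.pi / 2 * Real.exp (C / 2) * gam n τ)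

/-- `θ_n`, the maximal angular distance at which two points of radius `ρ(n)` are
adjacent in the hyperbolic disk of radius `R`. -/
noncomputable def theta (C τ : ℝ) (n : ℕ) : ℝ :=
  Real.arccos ((Real.cosh (rho C τ n) ^ 2 - Real.cosh (bigR C n)) /
    Real.sinh (rho C τ n) ^ 2)

/-- The number of sectors of angular width `θ_n` in the disk. -/
noncomputable def nSec (C τ : ℝ) (n : ℕ) : ℕ := ⌊2 * Real.pi / theta C τ n⌋₊

/-- The threshold `w = e^{γ(n,τ)}·log^{(3)}(n)` distinguishing narrow and wide runs. -/
noncomputable def wThr (n : ℕ) (τ : ℝ) : ℝ := Real.exp (gam n τ) * logloglog n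

/-- The index of the sector (among `n'` equal sectors of the disk) containing the
angle `φ`. -/
noncomputable def sectorIdx (n' : ℕ) (φ : ℝ) : ZMod n' :=
  ((⌊φ * n' / (2 * Real.pi)⌋ : ℤ) : ZMod n')

/-- `occupancy n' angles k` is `true` iff sector `k` contains the angular coordinate of
at least one of the points. -/
noncomputable def occupancy {n : ℕ} (n' : ℕ) (angles : Fin n → ℝ) (k : ZMod n') : Bool :=
  @decide (∃ i, sectorIdx n' (angles i) = k) (Classical.propDecidable _)

/-- The length of the maximal circular run of `true`s of `s` containing the index `i`;
`0` if `s i = false`. -/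
noncomputable def runLen {n' : ℕ} (s : ZMod n' → Bool) (i : ZMod n') : ℕ :=
  sSup {k : ℕ | k ≤ n' ∧ ∃ j : ZMod n',
    (∀ m : ℕ, m < k → s (j + (m : ZMod n')) = true) ∧
    ∃ t : ℕ, t < k ∧ i = j + (t : ZMod n')}

/-- The number of indices lying in a success run of length greater than `w`. -/
noncomputable def runSumGT {n' : ℕ} (w : ℝ) (s : ZMod n' → Bool) : ℕ :=
  Nat.card {i : ZMod n' | w < (runLen s i : ℝ)}

/-- The probability density of a point (angle, radius) of a hyperbolic random graph
with parameters `α` and disk radius `R`. -/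
noncomputable def hrgPDF (α R : ℝ) (p : ℝ × ℝ) : ℝ :=
  if 0 ≤ p.1 ∧ p.1 < 2 * Real.pi ∧ 0 ≤ p.2 ∧ p.2 ≤ R then
    (1 / (2 * Real.pi)) * (α * Real.sinh (α * p.2) / (Real.cosh (α * R) - 1))
  else 0

/-- The distribution of a single point (angle, radius) of a hyperbolic random graph. -/
noncomputable def hrgMeasure (α R : ℝ) : Measure (ℝ × ℝ) :=
  volume.withDensity fun p => ENNReal.ofReal (hrgPDF α R p)

/-- `pts` is a sample of a hyperbolic random graph on `n` vertices with parameters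
`α` and `C`: the points (angle, radius) are independent, each with the hyperbolic
density on the disk of radius `R = 2 log n + C`. -/
structure IsHRG (α C : ℝ) (n : ℕ) {Ω : Type*} [MeasurableSpace Ω] (μ : Measure Ω)
    (pts : Fin n → Ω → ℝ × ℝ) : Prop where
  meas : ∀ i, Measurable (pts i)
  indep : iIndepFun pts μ
  law : ∀ i, Measure.map (pts i) μ = hrgMeasure α (bigR C n)

/-- The number of sampled points whose angular coordinate lies in the angular interval
formed by the `ℓ` consecutive sectors `j, j+1, …, j+ℓ−1`. -/
noncomputable def ptsInWindow {n : ℕ} (n' : ℕ) (angles : Fin n → ℝ)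
    (j : ZMod n') (ℓ : ℕ) : ℕ :=
  Nat.card {i : Fin n | ∃ t : ℕ, t < ℓ ∧ sectorIdx n' (angles i) = j + (t : ZMod n')}

lemma pow_le_three_pow_mul_factorial : ∀ k : ℕ, (k : ℝ) ^ k ≤ 3 ^ k * (k.factorial : ℝ)
  | 0 => by norm_num
  | (k+1) => by
    have ih := pow_le_three_pow_mul_factorial k
    have key : ((k:ℝ)+1) ^ k ≤ 3 * (k:ℝ) ^ k := by
      rcases Nat.eq_zero_or_pos k with rfl | hk
      · norm_num
      · have hk0 : (0:ℝ) < k := by exact_mod_cast hk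
        have h1 : ((k:ℝ)+1) ^ k = (k:ℝ)^k * (1 + 1/(k:ℝ))^k := by
          rw [← mul_pow]; congr 1; field_simp
        have h2 : (1 + 1/(k:ℝ))^k ≤ Real.exp (1/(k:ℝ)) ^ k := by
          apply pow_le_pow_left₀ (by positivity)
          have := Real.add_one_le_exp (1/(k:ℝ)); linarith
        have h3 : Real.exp (1/(k:ℝ)) ^ k = Real.exp 1 := by
          rw [← Real.exp_nat_mul]; congr 1; field_simp
        have h4 : Real.exp 1 ≤ 3 := by
          have := Real.exp_one_lt_d9; linarith
        calc ((k:ℝ)+1) ^ k = (k:ℝ)^k * (1 + 1/(k:ℝ))^k := h1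
          _ ≤ (k:ℝ)^k * 3 := by
              apply mul_le_mul_of_nonneg_left _ (by positivity)
              calc (1 + 1/(k:ℝ))^k ≤ Real.exp (1/(k:ℝ)) ^ k := h2
                _ = Real.exp 1 := h3
                _ ≤ 3 := h4
          _ = 3 * (k:ℝ)^k := by ring
    calc ((k+1:ℕ) : ℝ) ^ (k+1) = ((k:ℝ)+1) * ((k:ℝ)+1) ^ k := by
          push_cast; ring
      _ ≤ ((k:ℝ)+1) * (3 * (k:ℝ)^k) := by
          apply mul_le_mul_of_nonneg_left key (by positivity)
      _ ≤ ((k:ℝ)+1) * (3 * (3^k * (k.factorial:ℝ))) := by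
          apply mul_le_mul_of_nonneg_left _ (by positivity)
          apply mul_le_mul_of_nonneg_left ih (by norm_num)
      _ = 3 ^ (k+1) * (((k+1) * k.factorial : ℕ) : ℝ) := by push_cast; ring
      _ = 3 ^ (k+1) * ((k+1).factorial : ℝ) := by rw [Nat.factorial_succ]

lemma arccos_one_sub_le {t : ℝ} (ht : 0 ≤ t) (ht2 : t ≤ 2) :
    Real.arccos (1 - t) ≤ Real.pi * Real.sqrt t := by
  set θ := Real.arccos (1 - t) with hθ
  have hmem : -1 ≤ 1 - t ∧ 1 - t ≤ 1 := ⟨by linarith, by linarith⟩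
  have hcos : Real.cos θ = 1 - t := Real.cos_arccos hmem.1 hmem.2
  have hθ0 : 0 ≤ θ := Real.arccos_nonneg _
  have hθπ : θ ≤ Real.pi := Real.arccos_le_pi _
  have hub : Real.cos θ ≤ 1 - 2 / Real.pi ^ 2 * θ ^ 2 :=
    Real.cos_le_one_sub_mul_cos_sq (by rw [abs_of_nonneg hθ0]; exact hθπ)
  have hπ : (0:ℝ) < Real.pi := Real.pi_pos
  have h2 : θ ^ 2 ≤ Real.pi ^ 2 * t := by
    rw [hcos] at hub
    have h5 : 2 / Real.pi ^ 2 * θ ^ 2 ≤ t := by linarith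
    have hp2 : (0:ℝ) < Real.pi ^ 2 := by positivity
    rw [div_mul_eq_mul_div, div_le_iff₀ hp2] at h5
    nlinarith [sq_nonneg θ]
  calc θ = Real.sqrt (θ^2) := by rw [Real.sqrt_sq hθ0]
    _ ≤ Real.sqrt (Real.pi^2 * t) := Real.sqrt_le_sqrt h2
    _ = Real.pi * Real.sqrt t := by
        rw [Real.sqrt_mul (by positivity), Real.sqrt_sq hπ.le]

lemma le_arccos_one_sub {t : ℝ} (ht : 0 ≤ t) (ht2 : t ≤ 2) :
    Real.sqrt t ≤ Real.arccos (1 - t) := by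
  set θ := Real.arccos (1 - t) with hθ
  have hmem : -1 ≤ 1 - t ∧ 1 - t ≤ 1 := ⟨by linarith, by linarith⟩
  have hcos : Real.cos θ = 1 - t := Real.cos_arccos hmem.1 hmem.2
  have hθ0 : 0 ≤ θ := Real.arccos_nonneg _
  have hlb : 1 - θ ^ 2 / 2 ≤ Real.cos θ := Real.one_sub_sq_div_two_le_cos
  have h2 : t ≤ θ ^ 2 := by rw [hcos] at hlb; linarith
  calc Real.sqrt t ≤ Real.sqrt (θ^2) := Real.sqrt_le_sqrt h2
    _ = θ := Real.sqrt_sq hθ0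

lemma ev_log_sq {A : ℝ} (hA : 0 < A) : ∀ᶠ y : ℝ in atTop, A * (Real.log y)^2 ≤ y := by
  filter_upwards [eventually_ge_atTop (1:ℝ), eventually_ge_atTop ((16*A)^2)] with y h1 h2
  have hy0 : 0 < y := lt_of_lt_of_le one_pos h1
  have hsy1 : 1 ≤ Real.sqrt y := by
    rw [show (1:ℝ) = Real.sqrt 1 by simp]; exact Real.sqrt_le_sqrt h1
  set s := Real.sqrt (Real.sqrt y) with hsdef
  have hs1 : 1 ≤ s := by
    rw [hsdef, show (1:ℝ) = Real.sqrt 1 by simp]; exact Real.sqrt_le_sqrt hsy1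
  have hlog : Real.log y = 4 * Real.log s := by
    rw [hsdef, Real.log_sqrt (Real.sqrt_nonneg y), Real.log_sqrt hy0.le]; ring
  have hlogs : Real.log s ≤ s := by
    have := Real.log_le_sub_one_of_pos (lt_of_lt_of_le one_pos hs1); linarith
  have hlog_nonneg : 0 ≤ Real.log y := Real.log_nonneg h1
  have hs0 : 0 ≤ s := by linarith
  have h16 : (Real.log y)^2 ≤ 16 * Real.sqrt y := by
    have hly : Real.log y ≤ 4*s := by rw [hlog]; linarith
    have hsq : s^2 = Real.sqrt y := Real.sq_sqrt (Real.sqrt_nonneg y)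
    nlinarith
  have hsqA : 16*A ≤ Real.sqrt y := by
    have := Real.sqrt_le_sqrt h2
    rwa [Real.sqrt_sq (by positivity)] at this
  have hsq2 : 16*A*Real.sqrt y ≤ y := by
    have hmul : Real.sqrt y * Real.sqrt y = y := Real.mul_self_sqrt hy0.le
    nlinarith [Real.sqrt_nonneg y]
  nlinarith [Real.sqrt_nonneg y, hA.le, mul_le_mul_of_nonneg_left h16 hA.le]

lemma ev_log_lin (A : ℝ) : ∀ᶠ y : ℝ in atTop, A * Real.log y ≤ y := by
  rcases le_or_gt A 0 with hA | hA
  · filter_upwards [eventually_ge_atTop (1:ℝ)] with y hy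
    have h1 := Real.log_nonneg hy
    nlinarith
  · filter_upwards [ev_log_sq hA, eventually_ge_atTop (Real.exp 1)] with y h1 h2
    have he1 : (1:ℝ) ≤ Real.exp 1 := Real.one_le_exp (by norm_num)
    have hy1 : (1:ℝ) ≤ y := le_trans he1 h2
    have hlog1 : 1 ≤ Real.log y := by
      rw [show (1:ℝ) = Real.log (Real.exp 1) by rw [Real.log_exp]]
      exact Real.log_le_log (Real.exp_pos 1) h2
    nlinarith

lemma choose_mul_le_half_pow {n k L n' : ℕ} (hn' : 0 < n') (hk : 1 ≤ k)
    (hX : (n:ℝ) * L / n' ≤ (k : ℝ) / 6) :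
    (n.choose k : ℝ) * ((L:ℝ)/(n':ℝ))^k ≤ (1/2 : ℝ)^k := by
  have hfacpos : (0:ℝ) < (k.factorial : ℝ) := by exact_mod_cast k.factorial_pos
  have hn'R : (0:ℝ) < (n' : ℝ) := by exact_mod_cast hn'
  have h1 : (n.choose k : ℝ) * (k.factorial : ℝ) ≤ (n:ℝ)^k := by
    have hd := Nat.descFactorial_le_pow n k
    have h2 : k.factorial * n.choose k = n.descFactorial k :=
      (Nat.descFactorial_eq_factorial_mul_choose n k).symm
    calc (n.choose k:ℝ) * (k.factorial:ℝ) = ((k.factorial * n.choose k : ℕ):ℝ) := by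
          push_cast; ring
      _ = ((n.descFactorial k : ℕ):ℝ) := by rw [h2]
      _ ≤ (n:ℝ)^k := by exact_mod_cast hd
  have h3 : (n.choose k : ℝ) ≤ (n:ℝ)^k / (k.factorial:ℝ) := by
    rw [le_div_iff₀ hfacpos]; exact h1
  have hXnn : (0:ℝ) ≤ (n:ℝ)*L/n' := by positivity
  have hLn' : (0:ℝ) ≤ (L:ℝ)/(n':ℝ) := by positivity
  have hkey : ((n:ℝ)*L/n')^k ≤ ((k:ℝ)/6)^k := pow_le_pow_left₀ hXnn hX k
  have h4 := pow_le_three_pow_mul_factorial k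
  calc (n.choose k:ℝ) * ((L:ℝ)/(n':ℝ))^k
      ≤ ((n:ℝ)^k / (k.factorial:ℝ)) * ((L:ℝ)/(n':ℝ))^k := by
        apply mul_le_mul_of_nonneg_right h3 (by positivity)
    _ = ((n:ℝ)*L/n')^k / (k.factorial:ℝ) := by
        rw [div_mul_eq_mul_div]
        congr 1
        rw [← mul_pow]
        congr 1
        field_simp
    _ ≤ ((k:ℝ)/6)^k / (k.factorial:ℝ) := by
        exact div_le_div_of_nonneg_right hkey hfacpos.le
    _ ≤ (1/2:ℝ)^k := by
        rw [div_le_iff₀ hfacpos, div_pow]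
        have h6pos : (0:ℝ) < 6^k := by positivity
        rw [div_le_iff₀ h6pos]
        have : ((1:ℝ)/2)^k * (k.factorial:ℝ) * 6^k = 3^k * (k.factorial:ℝ) := by
          rw [show ((1:ℝ)/2)^k * (k.factorial:ℝ) * 6^k = (k.factorial:ℝ) * ((1/2)^k * 6^k) by ring,
            ← mul_pow]
          norm_num
          ring
        rw [this]
        exact h4
lemma hrg_window_measure_le (α R : ℝ) (hα : 0 < α) (hR : 0 < R)
    (n' : ℕ) (hn' : 0 < n') (j : ZMod n') (L : ℕ) :
    hrgMeasure α R {p : ℝ × ℝ | ∃ t : ℕ, t < L ∧ sectorIdx n' p.1 = j + (t : ZMod n')}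
      ≤ ENNReal.ofReal ((L : ℝ) / n') := by
  haveI : NeZero n' := ⟨hn'.ne'⟩
  have hπ : (0:ℝ) < Real.pi := Real.pi_pos
  have h2π : (0:ℝ) < 2 * Real.pi := by positivity
  have hn'R : (0:ℝ) < (n' : ℝ) := by exact_mod_cast hn'
  set Z : Set ℤ := {z | ∃ t : ℕ, t < L ∧ ((z : ZMod n') = j + (t : ZMod n'))} with hZdef
  have hZ : MeasurableSet Z := Z.to_countable.measurableSet
  set fl : ℝ → ℤ := fun φ => ⌊φ * n' / (2 * Real.pi)⌋ with hfldef
  have hfl : Measurable fl := (measurable_id.mul_const _ |>.div_const _).floor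
  have hBeq : {p : ℝ × ℝ | ∃ t : ℕ, t < L ∧ sectorIdx n' p.1 = j + (t : ZMod n')}
      = (fun p : ℝ × ℝ => fl p.1) ⁻¹' Z := rfl
  have hB : MeasurableSet {p : ℝ × ℝ | ∃ t : ℕ, t < L ∧ sectorIdx n' p.1 = j + (t : ZMod n')} := by
    rw [hBeq]; exact (hfl.comp measurable_fst) hZ
  set A' : Set ℝ := (fl ⁻¹' Z) ∩ Set.Ico 0 (2 * Real.pi) with hA'def
  have hA' : MeasurableSet A' := (hfl hZ).inter measurableSet_Ico
  set D : ℝ := Real.cosh (α * R) - 1 with hDdef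
  have hD : 0 < D := by
    have : (1:ℝ) < Real.cosh (α * R) := Real.one_lt_cosh.2 (by positivity)
    linarith
  set h : ℝ → ℝ≥0∞ := A'.indicator (fun _ => ENNReal.ofReal (1 / (2 * Real.pi))) with hhdef
  set gf : ℝ → ℝ := (Set.Icc (0:ℝ) R).indicator (fun r => α * Real.sinh (α * r) / D) with hgfdef
  set gg : ℝ → ℝ≥0∞ := fun r => ENNReal.ofReal (gf r) with hggdef
  have hgf_cont : Continuous (fun r : ℝ => α * Real.sinh (α * r) / D) :=
    ((continuous_const.mul (Real.continuous_sinh.comp (continuous_const.mul continuous_id))).div_const _)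
  have hgf_meas : Measurable gf := hgf_cont.measurable.indicator measurableSet_Icc
  -- pointwise bound
  have hpoint : ∀ p : ℝ × ℝ,
      ((fun p : ℝ × ℝ => fl p.1) ⁻¹' Z).indicator
        (fun p => ENNReal.ofReal (hrgPDF α R p)) p ≤ h p.1 * gg p.2 := by
    intro p
    by_cases hpB : p ∈ (fun p : ℝ × ℝ => fl p.1) ⁻¹' Z
    · rw [Set.indicator_of_mem hpB]
      by_cases hsupp : 0 ≤ p.1 ∧ p.1 < 2 * Real.pi ∧ 0 ≤ p.2 ∧ p.2 ≤ R
      · have hp1 : p.1 ∈ A' := ⟨hpB, hsupp.1, hsupp.2.1⟩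
        have hh1 : h p.1 = ENNReal.ofReal (1 / (2 * Real.pi)) := Set.indicator_of_mem hp1 _
        have hg1 : gf p.2 = α * Real.sinh (α * p.2) / D :=
          Set.indicator_of_mem (Set.mem_Icc.2 ⟨hsupp.2.2.1, hsupp.2.2.2⟩) _
        rw [hrgPDF, if_pos hsupp, hh1, hggdef]
        simp only
        rw [hg1, ← ENNReal.ofReal_mul (by positivity)]
      · rw [hrgPDF, if_neg hsupp]
        simp
    · rw [Set.indicator_of_notMem hpB]
      exact zero_le
  have step1 : hrgMeasure α R {p : ℝ × ℝ | ∃ t : ℕ, t < L ∧ sectorIdx n' p.1 = j + (t : ZMod n')}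
      ≤ (∫⁻ x, h x) * (∫⁻ y, gg y) := by
    have hS : MeasurableSet ((fun p : ℝ × ℝ => fl p.1) ⁻¹' Z) := (hfl.comp measurable_fst) hZ
    rw [hrgMeasure, withDensity_apply _ hB, hBeq]
    rw [← lintegral_indicator hS]
    calc ∫⁻ p, ((fun p : ℝ × ℝ => fl p.1) ⁻¹' Z).indicator
            (fun p => ENNReal.ofReal (hrgPDF α R p)) p
        ≤ ∫⁻ p : ℝ × ℝ, h p.1 * gg p.2 := lintegral_mono hpoint
      _ = (∫⁻ x, h x) * (∫⁻ y, gg y) := by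
          rw [Measure.volume_eq_prod]
          exact lintegral_prod_mul
            ((measurable_const.indicator hA')).aemeasurable
            (ENNReal.measurable_ofReal.comp hgf_meas).aemeasurable
  -- bound on the angular integral
  have hvolA : volume A' ≤ (L : ℝ≥0∞) * ENNReal.ofReal (2 * Real.pi / n') := by
    have hsub : A' ⊆ ⋃ t ∈ Finset.range L,
        Set.Ico (2 * Real.pi * ((j + (t : ZMod n')).val : ℝ) / n')
          (2 * Real.pi * (((j + (t : ZMod n')).val : ℝ) + 1) / n') := by
      rintro φ ⟨hφZ, hφ0, hφ2π⟩
      obtain ⟨t, ht, hzt⟩ := hφZ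
      refine Set.mem_biUnion (Finset.mem_range.2 ht) ?_
      set z : ℤ := fl φ with hz
      set v : ℕ := (j + (t : ZMod n')).val with hv
      have hvlt : v < n' := ZMod.val_lt _
      have hz0 : 0 ≤ z := Int.floor_nonneg.2 (by positivity)
      have hzlt : z < (n' : ℤ) := by
        rw [hz, hfldef]
        apply Int.floor_lt.2
        push_cast
        rw [div_lt_iff₀ h2π]
        calc φ * n' < 2 * Real.pi * n' := by
              apply mul_lt_mul_of_pos_right hφ2π hn'R
          _ = (n':ℝ) * (2 * Real.pi) := by ring
      have hcastv : ((v : ℤ) : ZMod n') = j + (t : ZMod n') := by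
        rw [hv]; push_cast
        exact_mod_cast ZMod.natCast_rightInverse (j + (t : ZMod n'))
      have hzv : z = (v : ℤ) := by
        have : (z : ZMod n') = ((v : ℤ) : ZMod n') := by rw [hcastv]; exact hzt
        have hmod := (ZMod.intCast_eq_intCast_iff' _ _ _).1 this
        rwa [Int.emod_eq_of_lt hz0 hzlt,
          Int.emod_eq_of_lt (by positivity) (by exact_mod_cast hvlt)] at hmod
      have hzvR : ((fl φ : ℤ) : ℝ) = (v : ℝ) := by exact_mod_cast congrArg (fun x : ℤ => (x : ℝ)) hzv
      have hfloor : (v : ℝ) ≤ φ * n' / (2 * Real.pi) ∧ φ * n' / (2 * Real.pi) < (v : ℝ) + 1 := by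
        constructor
        · have h1 : ((fl φ : ℤ) : ℝ) ≤ φ * n' / (2 * Real.pi) := Int.floor_le _
          rwa [hzvR] at h1
        · have h1 : φ * n' / (2 * Real.pi) < ((fl φ : ℤ) : ℝ) + 1 := Int.lt_floor_add_one _
          rwa [hzvR] at h1
      constructor
      · rw [div_le_iff₀ hn'R]
        have := hfloor.1
        rw [le_div_iff₀ h2π] at this
        linarith
      · rw [lt_div_iff₀ hn'R]
        have := hfloor.2
        rw [div_lt_iff₀ h2π] at this
        linarith
    calc volume A' ≤ volume (⋃ t ∈ Finset.range L,
          Set.Ico (2 * Real.pi * ((j + (t : ZMod n')).val : ℝ) / n')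
            (2 * Real.pi * (((j + (t : ZMod n')).val : ℝ) + 1) / n')) := measure_mono hsub
      _ ≤ ∑ t ∈ Finset.range L, volume
            (Set.Ico (2 * Real.pi * ((j + (t : ZMod n')).val : ℝ) / n')
              (2 * Real.pi * (((j + (t : ZMod n')).val : ℝ) + 1) / n')) :=
          measure_biUnion_finset_le _ _
      _ = ∑ t ∈ Finset.range L, ENNReal.ofReal (2 * Real.pi / n') := by
          apply Finset.sum_congr rfl
          intro t _
          rw [Real.volume_Ico]
          congr 1
          field_simp
          ring
      _ = (L : ℝ≥0∞) * ENNReal.ofReal (2 * Real.pi / n') := by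
          rw [Finset.sum_const, Finset.card_range, nsmul_eq_mul]
  have hinth : (∫⁻ x, h x) ≤ ENNReal.ofReal (1 / (2 * Real.pi)) *
      ((L : ℝ≥0∞) * ENNReal.ofReal (2 * Real.pi / n')) := by
    rw [hhdef, lintegral_indicator_const hA']
    exact mul_le_mul_right hvolA _
  -- the radial integral is 1
  have hintg : (∫⁻ y, gg y) = 1 := by
    have hf_nonneg : 0 ≤ gf := by
      intro r
      apply Set.indicator_nonneg
      intro x hx
      have : 0 ≤ Real.sinh (α * x) := Real.sinh_nonneg_iff.2 (by
        rcases Set.mem_Icc.1 hx with ⟨h1, _⟩; positivity)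
      positivity
    have hf_int : Integrable gf := by
      rw [hgfdef]
      exact (hgf_cont.integrableOn_Icc).integrable_indicator measurableSet_Icc
    have : ENNReal.ofReal (∫ r, gf r) = ∫⁻ y, gg y :=
      ofReal_integral_eq_lintegral_ofReal hf_int (Filter.Eventually.of_forall hf_nonneg)
    rw [← this]
    have hint_eval : (∫ r, gf r) = 1 := by
      rw [hgfdef, integral_indicator measurableSet_Icc,
        MeasureTheory.integral_Icc_eq_integral_Ioc,
        ← intervalIntegral.integral_of_le hR.le]
      have hrw : ∀ x : ℝ, α * Real.sinh (α * x) / D = (α / D) * Real.sinh (α * x) := by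
        intro x; ring
      simp_rw [hrw]
      rw [intervalIntegral.integral_const_mul]
      have hcomp : (∫ x in (0:ℝ)..R, Real.sinh (α * x)) = α⁻¹ * (Real.cosh (α * R) - 1) := by
        rw [intervalIntegral.integral_comp_mul_left Real.sinh hα.ne']
        rw [mul_zero]
        have hsinhint : (∫ x in (0:ℝ)..(α*R), Real.sinh x) = Real.cosh (α*R) - Real.cosh 0 :=
          intervalIntegral.integral_deriv_eq_sub' Real.cosh Real.deriv_cosh
            (fun x _ => Real.differentiable_cosh.differentiableAt)
            (Real.continuous_sinh.continuousOn)
        rw [hsinhint, Real.cosh_zero]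
        simp [smul_eq_mul]
      rw [hcomp, hDdef]
      field_simp
      exact div_self hD.ne'
    rw [hint_eval, ENNReal.ofReal_one]
  calc hrgMeasure α R {p : ℝ × ℝ | ∃ t : ℕ, t < L ∧ sectorIdx n' p.1 = j + (t : ZMod n')}
      ≤ (∫⁻ x, h x) * (∫⁻ y, gg y) := step1
    _ = (∫⁻ x, h x) := by rw [hintg, mul_one]
    _ ≤ ENNReal.ofReal (1 / (2 * Real.pi)) * ((L : ℝ≥0∞) * ENNReal.ofReal (2 * Real.pi / n')) := hinth
    _ = ENNReal.ofReal ((L : ℝ) / n') := by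
        rw [← ENNReal.ofReal_natCast L, ← ENNReal.ofReal_mul (by positivity),
          ← ENNReal.ofReal_mul (by positivity)]
        congr 1
        field_simp


lemma helper_tau_mono {τ B : ℝ} (hτ : 0 < τ) (hB : 0 ≤ B) : τ*B ≤ (τ+1)*B := by nlinarith

lemma helper_hc {g L τ B : ℝ} (hg : 0 < g) (hgB : g ≤ B) (hB : 0 < B) (hτ : 0 < τ)
    (hL : L ≤ (τ+1)*B) (hL0 : 0 ≤ L) : 8*g*L ≤ 8*(τ+1)*B^2 := by nlinarith

lemma helper_exp4 {x : ℝ} (hx : 2 ≤ x) : 4 ≤ Real.exp x := by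
  have h1 : Real.exp 2 ≤ Real.exp x := Real.exp_le_exp.2 hx
  have h2 : (2:ℝ) ≤ Real.exp 1 := by have := Real.exp_one_gt_d9; linarith
  have h3 : Real.exp 2 = Real.exp 1 * Real.exp 1 := by rw [← Real.exp_add]; norm_num
  nlinarith

lemma helper_4n {x : ℝ} (h : 7 ≤ x) : 4*x ≤ x^2 := by nlinarith

lemma helper_t1 {t q : ℝ} (h : t ≤ 16*q^2) (hq : 0 ≤ q) (hq4 : q ≤ 1/4) : t ≤ 1 := by nlinarith

lemma helper_mulneg {a b l : ℝ} (h : b*l ≤ a*l) : a * -l ≤ b * -l := by nlinarith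

set_option maxHeartbeats 2000000 in
/-- **Short stretches of sectors contain few vertices.**
For a family of hyperbolic random graphs on `n` vertices with parameters
`α ∈ (1/2,1)`, `C`, and fixed `τ > 0`: for every constant `c > 0` there is a constant
`K` such that with probability `1 − O(n^{−c})`, every set of at most `2w + 1`
circularly consecutive sectors (with `w = e^{γ}·log^{(3)} n`) contains at most
`K·log n` of the `n` sampled points. -/
theorem short_runs_few_vertices_whp
    (α C τ : ℝ) (hα : α ∈ Set.Ioo (1 / 2 : ℝ) 1) (hτ : 0 < τ)
    (Ω : ℕ → Type) (mΩ : ∀ n, MeasurableSpace (Ω n))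
    (μ : ∀ n, Measure (Ω n)) (hμ : ∀ n, IsProbabilityMeasure (μ n))
    (pts : ∀ n, Fin n → Ω n → ℝ × ℝ)
    (hhrg : ∀ n, IsHRG α C n (μ n) (pts n)) :
    ∀ c : ℝ, 0 < c → ∃ K : ℝ, 0 < K ∧
      (fun n : ℕ => ((μ n) {ω | ∃ (j : ZMod (nSec C τ n)) (ℓ : ℕ),
          (ℓ : ℝ) ≤ 2 * wThr n τ + 1 ∧
          K * Real.log n <
            (ptsInWindow (nSec C τ n) (fun i => (pts n i ω).1) j ℓ : ℝ)}).toReal)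
        =O[atTop] fun n : ℕ => (n : ℝ) ^ (-c) := by
  obtain ⟨hα0, hα1⟩ := hα
  have hαpos : (0:ℝ) < α := lt_trans (by norm_num) hα0
  intro c hc
  have hlog2 : (0:ℝ) < Real.log 2 := Real.log_pos (by norm_num)
  set K : ℝ := (c + 2) / Real.log 2 + 1 with hKdef
  have hKpos : 0 < K := by positivity
  refine ⟨K, hKpos, ?_⟩
  rw [Asymptotics.isBigO_iff]
  refine ⟨1, ?_⟩
  have t1 : Tendsto (fun n : ℕ => Real.log n) atTop atTop :=
    Real.tendsto_log_atTop.comp tendsto_natCast_atTop_atTop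
  have t2 : Tendsto (fun n : ℕ => loglog n) atTop atTop :=
    Real.tendsto_log_atTop.comp t1
  have t3 : Tendsto (fun n : ℕ => logloglog n) atTop atTop :=
    Real.tendsto_log_atTop.comp t2
  have hF2' := t2.eventually (ev_log_sq (show (0:ℝ) < 2 * Real.exp 1 / τ by positivity))
  have hF7' := t1.eventually (ev_log_sq (show (0:ℝ) < 48*(τ+1)/K by positivity))
  have hF3' := t1.eventually (ev_log_lin (τ+1))
  have hF5' := t1.eventually (ev_log_lin 2)
  have hF9' := (tendsto_natCast_atTop_atTop (R := ℝ)).eventually (ev_log_lin 15)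
  filter_upwards [t3.eventually_ge_atTop 1, t2.eventually_ge_atTop 1,
      t1.eventually_ge_atTop (2 + |C|),
      t1.eventually_ge_atTop (1 + |C| + |Real.log (Real.pi / 2 * Real.exp (C / 2))|),
      t1.eventually_ge_atTop (1/K),
      hF2', hF7', hF3', hF5', hF9', eventually_ge_atTop 7]
    with n hCq1 hBq1 hA2C hAρ hAK hF2 hF7 hF3 hF5 hF9 hn7
  -- rewrite iterated log identities
  have hCqeq : Real.log (loglog n) = logloglog n := rfl
  have hBqeq : Real.log (Real.log (n:ℝ)) = loglog n := rfl
  rw [hCqeq] at hF2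
  rw [hBqeq] at hF7 hF3 hF5
  -- basic facts
  have hA2 : (2:ℝ) ≤ Real.log n := le_trans (by linarith [abs_nonneg C]) hA2C
  have hA0 : (0:ℝ) < Real.log n := by linarith
  have hBq0 : (0:ℝ) < loglog n := by linarith
  have hCq0 : (0:ℝ) < logloglog n := by linarith
  have hnR : (7:ℝ) ≤ (n:ℝ) := by exact_mod_cast hn7
  have hn0 : (0:ℝ) < (n:ℝ) := by linarith
  -- γ
  set g := gam n τ with hgdef
  have hargpos : (0:ℝ) < τ * loglog n / (2 * (logloglog n)^2) := by positivity
  have hg1 : (1:ℝ) ≤ g := by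
    have hmul := mul_le_mul_of_nonneg_left hF2 hτ.le
    have hid : τ * (2*Real.exp 1/τ * (logloglog n)^2) = 2*Real.exp 1*(logloglog n)^2 := by
      field_simp
    rw [hid] at hmul
    rw [hgdef, gam, Real.le_log_iff_exp_le hargpos, le_div_iff₀ (by positivity)]
    have hexp1 : Real.exp 1 * (2 * logloglog n ^ 2) = 2*Real.exp 1*(logloglog n)^2 := by ring
    rw [hexp1]
    linarith
  have hg0 : (0:ℝ) < g := by linarith
  have hgB : g ≤ loglog n := by
    have hle_tau : τ * loglog n / (2*(logloglog n)^2) ≤ τ * loglog n := by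
      apply div_le_self (by positivity)
      nlinarith [hCq1]
    rw [hgdef, gam]
    calc Real.log (τ * loglog n / (2*(logloglog n)^2)) ≤ Real.log (Real.log n) := by
          apply Real.log_le_log hargpos
          calc τ * loglog n / (2*(logloglog n)^2) ≤ τ * loglog n := hle_tau
            _ ≤ (τ+1) * loglog n := helper_tau_mono hτ hBq0.le
            _ ≤ Real.log n := hF3
      _ = loglog n := rfl
  have hexpg : Real.exp g = τ * loglog n/(2*(logloglog n)^2) := by
    rw [hgdef, gam, Real.exp_log hargpos]
  -- w and L
  have hw : wThr n τ = (τ * loglog n/(2*(logloglog n)^2)) * logloglog n := by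
    have : wThr n τ = Real.exp g * logloglog n := rfl
    rw [this, hexpg]
  set L := ⌊2 * wThr n τ + 1⌋₊ with hLdef
  have hwpos : 0 ≤ wThr n τ := by rw [hw]; positivity
  have hwL : (L:ℝ) ≤ (τ+1) * loglog n := by
    have h1 : (L:ℝ) ≤ 2 * wThr n τ + 1 := Nat.floor_le (by linarith)
    have h2 : 2 * wThr n τ = τ * loglog n / logloglog n := by
      rw [hw]; field_simp
    have h3 : τ * loglog n / logloglog n ≤ τ * loglog n := by
      apply div_le_self (by positivity) hCq1
    linarith [hBq1]
  -- R and ρ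
  have hbigR : bigR C n = 2*Real.log n + C := rfl
  have hRA : Real.log n ≤ bigR C n := by
    rw [hbigR]; linarith [neg_abs_le C]
  have hR2 : (2:ℝ) ≤ bigR C n := by
    rw [hbigR]; linarith [neg_abs_le C, abs_nonneg C]
  have hRpos : (0:ℝ) < bigR C n := by linarith
  have hD0pos : (0:ℝ) < Real.pi/2 * Real.exp (C/2) := by positivity
  have hD0g : (0:ℝ) < Real.pi/2 * Real.exp (C/2) * g := by positivity
  have hρdef : rho C τ n = bigR C n - Real.log (Real.pi/2*Real.exp (C/2) * g) := rfl
  have hlogD0g : Real.log (Real.pi/2*Real.exp (C/2)*g)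
      ≤ |Real.log (Real.pi/2*Real.exp (C/2))| + loglog n := by
    rw [Real.log_mul hD0pos.ne' (by positivity)]
    have h1 : Real.log g ≤ g := by
      have := Real.log_le_sub_one_of_pos hg0; linarith
    have h2 := le_abs_self (Real.log (Real.pi/2*Real.exp (C/2)))
    linarith [hgB]
  have hρ1 : (1:ℝ) ≤ rho C τ n := by
    rw [hρdef, hbigR]
    have h5 : loglog n ≤ Real.log n/2 := by linarith
    linarith [neg_abs_le C, hAρ, hlogD0g]
  have hρ0 : (0:ℝ) < rho C τ n := by linarith
  -- q and exp computations
  set q := Real.pi * g / (2 * (n:ℝ)) with hqdef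
  have hqpos : 0 < q := by
    rw [hqdef]; positivity
  have hexpA : Real.exp (Real.log n) = (n:ℝ) := Real.exp_log hn0
  have hexpR : Real.exp (bigR C n) = (n:ℝ)^2 * Real.exp C := by
    have hb : bigR C n = Real.log n + Real.log n + C := by rw [hbigR]; ring
    rw [hb, Real.exp_add, Real.exp_add, hexpA]; ring
  have hEC : Real.exp (C/2) * Real.exp (C/2) = Real.exp C := by
    rw [← Real.exp_add]; norm_num
  have hexpRc : Real.exp (bigR C n) = ((n:ℝ) * Real.exp (C/2))^2 := by
    rw [hexpR, mul_pow]
    congr 1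
    rw [pow_two, hEC]
  have hexpρ : Real.exp (rho C τ n)
      = Real.exp (bigR C n) / (Real.pi/2*Real.exp (C/2)*g) := by
    rw [hρdef, Real.exp_sub, Real.exp_log hD0g]
  have hq2 : Real.exp (bigR C n) / (Real.exp (rho C τ n))^2 = q^2 := by
    rw [hexpρ, hexpRc, hqdef]
    have hne1 : Real.exp (C/2) ≠ 0 := (Real.exp_pos _).ne'
    field_simp
  -- sinh and cosh bounds
  have hexpρ2 : (2:ℝ) ≤ Real.exp (rho C τ n) := by
    have h1 : Real.exp 1 ≤ Real.exp (rho C τ n) := Real.exp_le_exp.2 hρ1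
    have := Real.exp_one_gt_d9
    linarith
  have hexpnegρ : Real.exp (-(rho C τ n)) ≤ 1 := by
    rw [show (1:ℝ) = Real.exp 0 from Real.exp_zero.symm]
    exact Real.exp_le_exp.2 (by linarith)
  have hsinh_ub : Real.sinh (rho C τ n) ≤ Real.exp (rho C τ n) / 2 := by
    rw [Real.sinh_eq]; have := Real.exp_pos (-(rho C τ n)); linarith
  have hsinh_lb : Real.exp (rho C τ n) / 4 ≤ Real.sinh (rho C τ n) := by
    rw [Real.sinh_eq]; linarith
  have hsinh_pos : 0 < Real.sinh (rho C τ n) := lt_of_lt_of_le (by positivity) hsinh_lb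
  have hexpR4 : (4:ℝ) ≤ Real.exp (bigR C n) := helper_exp4 hR2
  have hexpnegR : Real.exp (-(bigR C n)) ≤ 1 := by
    rw [show (1:ℝ) = Real.exp 0 from Real.exp_zero.symm]
    exact Real.exp_le_exp.2 (by linarith)
  have hcosh_ub : Real.cosh (bigR C n) - 1 ≤ Real.exp (bigR C n) := by
    rw [Real.cosh_eq]; linarith
  have hcosh_lb : Real.exp (bigR C n)/4 ≤ Real.cosh (bigR C n) - 1 := by
    rw [Real.cosh_eq]; linarith [Real.exp_pos (-(bigR C n))]
  set t := (Real.cosh (bigR C n) - 1) / (Real.sinh (rho C τ n))^2 with htdef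
  have htpos : 0 < t := by
    apply div_pos (by linarith) (by positivity)
  have hsinh_sq_ub : (Real.sinh (rho C τ n))^2 ≤ (Real.exp (rho C τ n))^2/4 := by
    have h := pow_le_pow_left₀ hsinh_pos.le hsinh_ub 2
    calc (Real.sinh (rho C τ n))^2 ≤ (Real.exp (rho C τ n)/2)^2 := h
      _ = (Real.exp (rho C τ n))^2/4 := by ring
  have hsinh_sq_lb : (Real.exp (rho C τ n))^2/16 ≤ (Real.sinh (rho C τ n))^2 := by
    have h := pow_le_pow_left₀ (by positivity) hsinh_lb 2
    calc (Real.exp (rho C τ n))^2/16 = (Real.exp (rho C τ n)/4)^2 := by ring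
      _ ≤ (Real.sinh (rho C τ n))^2 := h
  have hq2t_low : q^2 ≤ t := by
    rw [← hq2, htdef]
    have hrw : Real.exp (bigR C n)/(Real.exp (rho C τ n))^2
        = (Real.exp (bigR C n)/4)/((Real.exp (rho C τ n))^2/4) := by
      field_simp
    rw [hrw]
    exact div_le_div₀ (by linarith) hcosh_lb (by positivity) hsinh_sq_ub
  have hq2t_high : t ≤ 16 * q^2 := by
    rw [← hq2, htdef]
    have hrw : 16 * (Real.exp (bigR C n)/(Real.exp (rho C τ n))^2)
        = Real.exp (bigR C n)/((Real.exp (rho C τ n))^2/16) := by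
      field_simp
    rw [hrw]
    exact div_le_div₀ (by positivity) hcosh_ub (by positivity) hsinh_sq_lb
  -- q ≤ 1/4 and t ≤ 1
  have hgA2 : g ≤ Real.log n/2 := by linarith [hgB, hF5]
  have hq14 : q ≤ 1/4 := by
    rw [hqdef, div_le_iff₀ (by positivity)]
    have hπ4 : Real.pi ≤ 4 := Real.pi_le_four
    have h1 : Real.pi * g ≤ 4 * g := mul_le_mul_of_nonneg_right hπ4 hg0.le
    linarith
  have ht1 : t ≤ 1 := helper_t1 hq2t_high hqpos.le hq14
  -- θ bounds
  have hidcs : Real.cosh (rho C τ n)^2 - Real.sinh (rho C τ n)^2 = 1 :=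
    Real.cosh_sq_sub_sinh_sq _
  have hargθ : (Real.cosh (rho C τ n)^2 - Real.cosh (bigR C n)) / (Real.sinh (rho C τ n))^2
      = 1 - t := by
    rw [htdef]
    field_simp
    linarith
  have hθeq : theta C τ n = Real.arccos (1 - t) := by
    rw [show theta C τ n = Real.arccos ((Real.cosh (rho C τ n) ^ 2 - Real.cosh (bigR C n)) /
      Real.sinh (rho C τ n) ^ 2) from rfl, hargθ]
  have hθub : theta C τ n ≤ 4 * Real.pi * q := by
    rw [hθeq]
    calc Real.arccos (1-t) ≤ Real.pi * Real.sqrt t := arccos_one_sub_le htpos.le (by linarith)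
      _ ≤ Real.pi * (4*q) := by
          apply mul_le_mul_of_nonneg_left _ Real.pi_pos.le
          calc Real.sqrt t ≤ Real.sqrt (16*q^2) := Real.sqrt_le_sqrt hq2t_high
            _ = 4*q := by
                rw [show (16:ℝ)*q^2 = (4*q)^2 by ring, Real.sqrt_sq (by positivity)]
      _ = 4*Real.pi*q := by ring
  have hθlb : q ≤ theta C τ n := by
    rw [hθeq]
    calc q = Real.sqrt (q^2) := by rw [Real.sqrt_sq hqpos.le]
      _ ≤ Real.sqrt t := Real.sqrt_le_sqrt hq2t_low
      _ ≤ Real.arccos (1-t) := le_arccos_one_sub htpos.le (by linarith)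
  have hθpos : 0 < theta C τ n := lt_of_lt_of_le hqpos hθlb
  -- n' bounds
  set n' := nSec C τ n with hn'def
  have hn'ub2 : (n':ℝ) ≤ 2*Real.pi/theta C τ n := by
    rw [hn'def]
    exact Nat.floor_le (by positivity)
  have hq4n : 2*Real.pi/q = 4*(n:ℝ)/g := by
    rw [hqdef]; field_simp; ring
  have hn'n2 : (n':ℝ) ≤ (n:ℝ)^2 := by
    have h1 : 2*Real.pi/theta C τ n ≤ 2*Real.pi/q :=
      div_le_div_of_nonneg_left (by positivity) hqpos hθlb
    have h2 : 4*(n:ℝ)/g ≤ 4*(n:ℝ) := div_le_self (by positivity) hg1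
    have h3 : 4*(n:ℝ) ≤ (n:ℝ)^2 := helper_4n hnR
    rw [hq4n] at h1
    linarith
  have hn'lb : (n:ℝ)/(8*g) ≤ (n':ℝ) := by
    have hfl : 2*Real.pi/theta C τ n - 1 < (n':ℝ) := by
      rw [hn'def]
      exact Nat.sub_one_lt_floor _
    have h1 : 2*Real.pi/(4*Real.pi*q) ≤ 2*Real.pi/theta C τ n :=
      div_le_div_of_nonneg_left (by positivity) hθpos hθub
    have h2 : 2*Real.pi/(4*Real.pi*q) = (n:ℝ)/(Real.pi*g) := by
      rw [hqdef]; field_simp; ring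
    have h3 : (n:ℝ)/(4*g) ≤ (n:ℝ)/(Real.pi*g) := by
      apply div_le_div_of_nonneg_left (by positivity) (by positivity)
      exact mul_le_mul_of_nonneg_right Real.pi_le_four hg0.le
    have hsplit : (n:ℝ)/(4*g) = (n:ℝ)/(8*g) + (n:ℝ)/(8*g) := by
      field_simp; ring
    have h8g : (1:ℝ) ≤ (n:ℝ)/(8*g) := by
      rw [le_div_iff₀ (by positivity)]
      linarith [hgA2, hF9, hA0]
    rw [h2] at h1
    linarith
  have hn'pos : 0 < n' := by
    have h0 : (0:ℝ) < (n':ℝ) := lt_of_lt_of_le (by positivity) hn'lb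
    exact_mod_cast h0
  haveI : NeZero n' := ⟨hn'pos.ne'⟩
  -- k
  set k := ⌈K * Real.log n⌉₊ with hkdef
  have hKA1 : (1:ℝ) ≤ K * Real.log n := by
    rw [show (1:ℝ) = K * (1/K) by field_simp]
    exact mul_le_mul_of_nonneg_left hAK hKpos.le
  have hk1 : 1 ≤ k := by
    rw [hkdef]
    exact Nat.one_le_ceil_iff.2 (by linarith)
  have hkKA : K * Real.log n ≤ (k:ℝ) := Nat.le_ceil _
  -- X ≤ k/6
  have hLn'X : (n:ℝ) * (L:ℝ) / (n':ℝ) ≤ (k:ℝ)/6 := by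
    have hL0 : (0:ℝ) ≤ (L:ℝ) := Nat.cast_nonneg _
    have hn'R0 : (0:ℝ) < (n':ℝ) := by exact_mod_cast hn'pos
    have ha : (n:ℝ)*(L:ℝ)/(n':ℝ) ≤ (n:ℝ)*(L:ℝ)/((n:ℝ)/(8*g)) :=
      div_le_div_of_nonneg_left (by positivity) (by positivity) hn'lb
    have hb : (n:ℝ)*(L:ℝ)/((n:ℝ)/(8*g)) = 8*g*(L:ℝ) := by
      field_simp
    have hc : 8*g*(L:ℝ) ≤ 8*(τ+1)*(loglog n)^2 := by
      exact helper_hc hg0 hgB hBq0 hτ hwL (Nat.cast_nonneg _)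
    have hd : 8*(τ+1)*(loglog n)^2 ≤ K*Real.log n/6 := by
      have heq : K/6*((48*(τ+1)/K)*(loglog n)^2) = 8*(τ+1)*(loglog n)^2 := by
        field_simp; ring
      have hm := mul_le_mul_of_nonneg_left hF7 (by positivity : (0:ℝ) ≤ K/6)
      rw [heq] at hm
      linarith
    rw [hb] at ha
    calc (n:ℝ)*(L:ℝ)/(n':ℝ) ≤ 8*g*(L:ℝ) := ha
      _ ≤ 8*(τ+1)*(loglog n)^2 := hc
      _ ≤ K*Real.log n/6 := hd
      _ ≤ (k:ℝ)/6 := div_le_div_of_nonneg_right hkKA (by norm_num)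
  -- window sets
  set Bset : ZMod n' → Set (ℝ × ℝ) := fun j =>
    {p : ℝ × ℝ | ∃ t' : ℕ, t' < L ∧ sectorIdx n' p.1 = j + (t' : ZMod n')} with hBsetdef
  have hBmeas : ∀ j, MeasurableSet (Bset j) := by
    intro j
    have hZ : MeasurableSet {z : ℤ | ∃ t' : ℕ, t' < L ∧ ((z : ZMod n') = j + (t' : ZMod n'))} :=
      (Set.to_countable _).measurableSet
    have hflm : Measurable (fun φ : ℝ => ⌊φ * n' / (2 * Real.pi)⌋) :=
      (measurable_id.mul_const _ |>.div_const _).floor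
    exact (hflm.comp measurable_fst) hZ
  -- inclusion in union of intersections
  have hincl : {ω | ∃ (j : ZMod n') (ℓ : ℕ),
        (ℓ : ℝ) ≤ 2 * wThr n τ + 1 ∧
        K * Real.log n < (ptsInWindow n' (fun i => (pts n i ω).1) j ℓ : ℝ)}
      ⊆ ⋃ j : ZMod n', ⋃ S ∈ Finset.powersetCard k (Finset.univ : Finset (Fin n)),
          ⋂ i ∈ S, (pts n i) ⁻¹' (Bset j) := by
    intro ω hω
    obtain ⟨j, ℓ, hℓ, hgt⟩ := hω
    have hℓL : ℓ ≤ L := Nat.le_floor hℓ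
    set T : Set (Fin n) :=
      {i | ∃ t' : ℕ, t' < L ∧ sectorIdx n' ((pts n i ω).1) = j + (t' : ZMod n')} with hTdef
    have hsubT : {i : Fin n | ∃ t' : ℕ, t' < ℓ ∧
        sectorIdx n' ((pts n i ω).1) = j + (t' : ZMod n')} ⊆ T := by
      rintro i ⟨t', ht', hst⟩
      exact ⟨t', lt_of_lt_of_le ht' hℓL, hst⟩
    have hc0 : ptsInWindow n' (fun i => (pts n i ω).1) j ℓ
        = ({i : Fin n | ∃ t' : ℕ, t' < ℓ ∧
            sectorIdx n' ((pts n i ω).1) = j + (t' : ZMod n')}).ncard :=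
      Nat.card_coe_set_eq _
    have hcard1 : ptsInWindow n' (fun i => (pts n i ω).1) j ℓ ≤ T.ncard := by
      rw [hc0]
      exact Set.ncard_le_ncard hsubT (Set.toFinite T)
    have hkT : k ≤ T.ncard := by
      rw [hkdef]
      apply Nat.ceil_le.2
      calc K * Real.log n ≤ (ptsInWindow n' (fun i => (pts n i ω).1) j ℓ : ℝ) := hgt.le
        _ ≤ (T.ncard : ℝ) := by exact_mod_cast hcard1
    obtain ⟨tset, htsub, htcard⟩ := Set.exists_subset_card_eq hkT
    have htfin : tset.Finite := Set.toFinite _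
    refine Set.mem_iUnion.2 ⟨j, ?_⟩
    refine Set.mem_biUnion (show htfin.toFinset ∈
      Finset.powersetCard k (Finset.univ : Finset (Fin n)) from ?_) ?_
    · rw [Finset.mem_powersetCard_univ, ← Set.ncard_eq_toFinset_card tset htfin]
      exact htcard
    · apply Set.mem_iInter₂.2
      intro i hi
      exact htsub (htfin.mem_toFinset.1 hi)
  -- measure bound
  have hper : ∀ j : ZMod n', ∀ S ∈ Finset.powersetCard k (Finset.univ : Finset (Fin n)),
      μ n (⋂ i ∈ S, (pts n i) ⁻¹' (Bset j)) ≤ ENNReal.ofReal ((L:ℝ)/(n':ℝ))^k := by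
    intro j S hS
    have hSk : S.card = k := (Finset.mem_powersetCard_univ).1 hS
    have hindep := (hhrg n).indep.meas_biInter (S := S)
      (s := fun i => (pts n i) ⁻¹' (Bset j)) (fun i _ => ⟨Bset j, hBmeas j, rfl⟩)
    rw [hindep]
    have hfac : ∀ i, μ n ((pts n i) ⁻¹' (Bset j)) = hrgMeasure α (bigR C n) (Bset j) := by
      intro i
      rw [← (hhrg n).law i, Measure.map_apply ((hhrg n).meas i) (hBmeas j)]
    calc ∏ i ∈ S, μ n ((pts n i) ⁻¹' (Bset j))
        = ∏ _i ∈ S, hrgMeasure α (bigR C n) (Bset j) :=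
          Finset.prod_congr rfl (fun i _ => hfac i)
      _ = hrgMeasure α (bigR C n) (Bset j) ^ S.card := Finset.prod_const _
      _ = hrgMeasure α (bigR C n) (Bset j) ^ k := by rw [hSk]
      _ ≤ ENNReal.ofReal ((L:ℝ)/(n':ℝ))^k :=
          pow_le_pow_left' (hrg_window_measure_le α (bigR C n) hαpos hRpos n' hn'pos j L) k
  have hsum : μ n {ω | ∃ (j : ZMod n') (ℓ : ℕ),
        (ℓ : ℝ) ≤ 2 * wThr n τ + 1 ∧
        K * Real.log n < (ptsInWindow n' (fun i => (pts n i ω).1) j ℓ : ℝ)}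
      ≤ (n' : ℝ≥0∞) * ((n.choose k : ℝ≥0∞) * ENNReal.ofReal ((L:ℝ)/(n':ℝ))^k) := by
    calc μ n _ ≤ μ n (⋃ j : ZMod n',
          ⋃ S ∈ Finset.powersetCard k (Finset.univ : Finset (Fin n)),
          ⋂ i ∈ S, (pts n i) ⁻¹' (Bset j)) := measure_mono hincl
      _ ≤ ∑' j : ZMod n', μ n (⋃ S ∈ Finset.powersetCard k (Finset.univ : Finset (Fin n)),
            ⋂ i ∈ S, (pts n i) ⁻¹' (Bset j)) := measure_iUnion_le _
      _ = ∑ j : ZMod n', μ n (⋃ S ∈ Finset.powersetCard k (Finset.univ : Finset (Fin n)),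
            ⋂ i ∈ S, (pts n i) ⁻¹' (Bset j)) := tsum_fintype _
      _ ≤ ∑ j : ZMod n', ∑ S ∈ Finset.powersetCard k (Finset.univ : Finset (Fin n)),
            μ n (⋂ i ∈ S, (pts n i) ⁻¹' (Bset j)) :=
          Finset.sum_le_sum (fun j _ => measure_biUnion_finset_le _ _)
      _ ≤ ∑ _j : ZMod n', ∑ _S ∈ Finset.powersetCard k (Finset.univ : Finset (Fin n)),
            ENNReal.ofReal ((L:ℝ)/(n':ℝ))^k :=
          Finset.sum_le_sum (fun j _ => Finset.sum_le_sum (hper j))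
      _ = (n' : ℝ≥0∞) * ((n.choose k : ℝ≥0∞) * ENNReal.ofReal ((L:ℝ)/(n':ℝ))^k) := by
          simp only [Finset.sum_const, Finset.card_powersetCard, Finset.card_univ,
            Fintype.card_fin, ZMod.card, nsmul_eq_mul]
  -- the real-number estimate
  have hreal : (n':ℝ) * ((n.choose k : ℝ) * ((L:ℝ)/(n':ℝ))^k) ≤ (n:ℝ)^(-c : ℝ) := by
    have hmain : (n.choose k : ℝ) * ((L:ℝ)/(n':ℝ))^k ≤ (1/2:ℝ)^k :=
      choose_mul_le_half_pow hn'pos hk1 hLn'X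
    have hhalf : ((1:ℝ)/2)^k ≤ (n:ℝ)^(-(K*Real.log 2) : ℝ) := by
      have hhe : ((1:ℝ)/2) = Real.exp (-(Real.log 2)) := by
        rw [Real.exp_neg, Real.exp_log (by norm_num : (0:ℝ) < 2)]
        norm_num
      rw [hhe, ← Real.exp_nat_mul, Real.rpow_def_of_pos hn0]
      apply Real.exp_le_exp.2
      have hmm : (K * Real.log n) * Real.log 2 ≤ (k:ℝ) * Real.log 2 :=
        mul_le_mul_of_nonneg_right hkKA hlog2.le
      have := helper_mulneg hmm
      linarith [this]
    have hchain : (n':ℝ) * ((n.choose k:ℝ) * ((L:ℝ)/(n':ℝ))^k)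
        ≤ (n:ℝ)^2 * (n:ℝ)^(-(K*Real.log 2) : ℝ) := by
      have h1 : (n.choose k:ℝ) * ((L:ℝ)/(n':ℝ))^k ≤ (n:ℝ)^(-(K*Real.log 2) : ℝ) :=
        le_trans hmain hhalf
      calc (n':ℝ) * ((n.choose k:ℝ) * ((L:ℝ)/(n':ℝ))^k)
          ≤ (n':ℝ) * (n:ℝ)^(-(K*Real.log 2) : ℝ) :=
            mul_le_mul_of_nonneg_left h1 (Nat.cast_nonneg _)
        _ ≤ (n:ℝ)^2 * (n:ℝ)^(-(K*Real.log 2) : ℝ) :=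
            mul_le_mul_of_nonneg_right hn'n2 (Real.rpow_nonneg hn0.le _)
    have hfinal : (n:ℝ)^2 * (n:ℝ)^(-(K*Real.log 2) : ℝ) ≤ (n:ℝ)^(-c : ℝ) := by
      have h1 : (n:ℝ)^(2:ℕ) = (n:ℝ)^((2:ℕ):ℝ) := (Real.rpow_natCast _ 2).symm
      rw [h1, ← Real.rpow_add hn0]
      apply Real.rpow_le_rpow_of_exponent_le (by linarith)
      have hKlog : K * Real.log 2 = c + 2 + Real.log 2 := by
        rw [hKdef]; field_simp
      push_cast
      linarith
    linarith
  -- assemble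
  rw [Real.norm_eq_abs, Real.norm_eq_abs, one_mul]
  have hrpownn : (0:ℝ) ≤ (n:ℝ)^(-c:ℝ) := Real.rpow_nonneg hn0.le _
  rw [abs_of_nonneg ENNReal.toReal_nonneg, abs_of_nonneg hrpownn]
  apply ENNReal.toReal_le_of_le_ofReal hrpownn
  have hofReal : (n' : ℝ≥0∞) * ((n.choose k : ℝ≥0∞) * ENNReal.ofReal ((L:ℝ)/(n':ℝ))^k)
      = ENNReal.ofReal ((n':ℝ) * ((n.choose k : ℝ) * ((L:ℝ)/(n':ℝ))^k)) := by
    rw [← ENNReal.ofReal_pow (by positivity), ← ENNReal.ofReal_natCast (n.choose k),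
      ← ENNReal.ofReal_natCast n', ← ENNReal.ofReal_mul (by positivity),
      ← ENNReal.ofReal_mul (by positivity)]
  calc μ n _ ≤ (n' : ℝ≥0∞) * ((n.choose k : ℝ≥0∞) * ENNReal.ofReal ((L:ℝ)/(n':ℝ))^k) := hsum
    _ = ENNReal.ofReal ((n':ℝ) * ((n.choose k : ℝ) * ((L:ℝ)/(n':ℝ))^k)) := hofReal
    _ ≤ ENNReal.ofReal ((n:ℝ)^(-c:ℝ)) := ENNReal.ofReal_le_ofReal hreal
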